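/- Shared-entanglement policies strictly contain shared-randomness policies (Bell inequality violation). Precisely: with ρ_Bell, M(a|x), N(b|y) as follows — ρ_Bell the 4×4 matrix with entries 1/2 at positions (1,1), (1,4), (4,1), (4,4) and 0 elsewhere; θ = π/8; M(0|0) = [[1,0],[0,0]], M(1|0) = [[0,0],[0,1]], M(0|1) = [[1/2,1/2],[1/2,1/2]], M(1|1) = [[1/2,−1/2],[−1/2,1/2]]; N(0|0) = [[cos²θ, cosθ·sinθ],[cosθ·sinθ, sin²θ]], N(1|0) = I_2 − N(0|0), N(0|1) = [[cos²θ, −cosθ·sinθ],[−cosθ·sinθ, sin²θ]], N(1|1) = I_2 − N(0|1) — define p(a,b|x,y) = tr(ρ_Bell (M(a|x) ⊗ N(b|y))) for a,b,x,y ∈ {0,1}. Then there do NOT exist a finite nonempty set Λ, a distribution q ∈ Δ(Λ), and functions p_1 : {0,1} × Λ → Δ({0,1}), p_2 : {0,1} × Λ → Δ({0,1}) such that p(a,b|x,y) = Σ_{λ∈Λ} q(λ) p_1(x,λ)(a) p_2(y,λ)(b) for all a, b, x, y ∈ {0,1}. -/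
import Mathlib


open scoped ComplexOrder Kronecker
open Matrix

/-- A probability mass function on a finite type `Y`. -/
def IsPMF {Y : Type*} [Fintype Y] (p : Y → ℝ) : Prop :=
  (∀ y, 0 ≤ p y) ∧ ∑ y, p y = 1

/-- The Bell state: the 4×4 density matrix (indexed by `Fin 2 × Fin 2` in the standard
Kronecker ordering, so that the 1-based positions (1,1), (1,4), (4,1), (4,4) carry the
entry 1/2) with all other entries 0. -/
noncomputable def rhoBell : Matrix (Fin 2 × Fin 2) (Fin 2 × Fin 2) ℂ :=
  Matrix.of fun i j =>
    if (i = (0, 0) ∨ i = (1, 1)) ∧ (j = (0, 0) ∨ j = (1, 1)) then (1 / 2 : ℂ) else 0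

/-- Alice's CHSH measurements `M(a|x)`. -/
noncomputable def chshM (a x : Fin 2) : Matrix (Fin 2) (Fin 2) ℂ :=
  if x = 0 then
    if a = 0 then !![1, 0; 0, 0] else !![0, 0; 0, 1]
  else
    if a = 0 then !![1/2, 1/2; 1/2, 1/2] else !![1/2, -(1/2); -(1/2), 1/2]

/-- Bob's CHSH measurements `N(b|y)`, with `θ = π/8`. -/
noncomputable def chshN (b y : Fin 2) : Matrix (Fin 2) (Fin 2) ℂ :=
  let c : ℂ := Real.cos (Real.pi / 8)
  let s : ℂ := Real.sin (Real.pi / 8)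
  if y = 0 then
    if b = 0 then !![c ^ 2, c * s; c * s, s ^ 2]
    else 1 - !![c ^ 2, c * s; c * s, s ^ 2]
  else
    if b = 0 then !![c ^ 2, -(c * s); -(c * s), s ^ 2]
    else 1 - !![c ^ 2, -(c * s); -(c * s), s ^ 2]

/-- Value table for the CHSH quantum correlations. -/
noncomputable def chshTbl (a b x y : Fin 2) : ℝ :=
  let c : ℝ := Real.cos (Real.pi / 8)
  let s : ℝ := Real.sin (Real.pi / 8)
  if x = 0 then
    if a = 0 then (if b = 0 then c^2/2 else (1-c^2)/2)
    else (if b = 0 then s^2/2 else (1-s^2)/2)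
  else
    ((if b = 0 then c^2+s^2 else 2-c^2-s^2)
      + (if a = 0 then 1 else -1)*(if b = y then 1 else -1)*2*c*s)/4

set_option maxHeartbeats 2000000 in
lemma chsh_tr_val (a b x y : Fin 2) :
    (rhoBell * (chshM a x ⊗ₖ chshN b y)).trace = ((chshTbl a b x y : ℝ) : ℂ) := by
  fin_cases a <;> fin_cases b <;> fin_cases x <;> fin_cases y <;>
  · simp [Matrix.trace, Matrix.mul_apply, Fintype.sum_prod_type, Fin.sum_univ_succ,
      rhoBell, chshM, chshN, chshTbl, Matrix.diag, Matrix.sub_apply, Matrix.one_apply]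
    ring

set_option maxHeartbeats 4000000

/-- Bell inequality violation: the bipartite conditional distribution
`p(a,b|x,y) = tr(ρ_Bell (M(a|x) ⊗ N(b|y)))` produced by the CHSH shared-entanglement
strategy cannot be reproduced by any shared-randomness (local hidden variable) model:
there are no finite nonempty `Λ`, `q ∈ Δ(Λ)` and local response distributions
`p₁, p₂` with `p(a,b|x,y) = ∑ λ, q λ * p₁ x λ a * p₂ y λ b` for all `a, b, x, y`. -/
theorem chsh_strategy_not_sharedRandomness :
    ¬ ∃ (Λ : Type) (_ : Fintype Λ) (_ : Nonempty Λ) (q : Λ → ℝ)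
        (p₁ p₂ : Fin 2 → Λ → Fin 2 → ℝ),
        IsPMF q ∧ (∀ x lam, IsPMF (p₁ x lam)) ∧ (∀ y lam, IsPMF (p₂ y lam)) ∧
        ∀ a b x y : Fin 2,
          (rhoBell * (chshM a x ⊗ₖ chshN b y)).trace
            = ((∑ lam, q lam * p₁ x lam a * p₂ y lam b : ℝ) : ℂ) := by
  
  rintro ⟨Λ, _, _, q, p₁, p₂, hq, hp₁, hp₂, h⟩
  set c : ℝ := Real.cos (Real.pi / 8) with hc
  set s : ℝ := Real.sin (Real.pi / 8) with hs
  have hcs : s ^ 2 + c ^ 2 = 1 := Real.sin_sq_add_cos_sq _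
  have hc2 : c ^ 2 - s ^ 2 = Real.sqrt 2 / 2 := by
    have h4 : Real.cos (Real.pi / 4) = 2 * c ^ 2 - 1 := by
      rw [show Real.pi / 4 = 2 * (Real.pi / 8) by ring, Real.cos_two_mul, hc]
    rw [Real.cos_pi_div_four] at h4
    linarith
  have hs2 : 2 * c * s = Real.sqrt 2 / 2 := by
    have h4 := Real.sin_two_mul (Real.pi / 8)
    rw [show 2 * (Real.pi / 8) = Real.pi / 4 by ring, Real.sin_pi_div_four] at h4
    rw [hc, hs]; linarith
  have hreal : ∀ a b x y : Fin 2,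
      (∑ lam, q lam * p₁ x lam a * p₂ y lam b) = chshTbl a b x y := by
    intro a b x y
    have := (h a b x y).symm.trans (chsh_tr_val a b x y)
    exact_mod_cast this
  have hE : ∀ x y : Fin 2,
      ∑ lam, q lam * (p₁ x lam 0 - p₁ x lam 1) * (p₂ y lam 0 - p₂ y lam 1)
        = chshTbl 0 0 x y - chshTbl 0 1 x y - chshTbl 1 0 x y + chshTbl 1 1 x y := by
    intro x y
    rw [← hreal 0 0 x y, ← hreal 0 1 x y, ← hreal 1 0 x y, ← hreal 1 1 x y,
      ← Finset.sum_sub_distrib, ← Finset.sum_sub_distrib, ← Finset.sum_add_distrib]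
    exact Finset.sum_congr rfl fun lam _ => by ring
  have htbl : (chshTbl 0 0 0 0 - chshTbl 0 1 0 0 - chshTbl 1 0 0 0 + chshTbl 1 1 0 0)
      + (chshTbl 0 0 0 1 - chshTbl 0 1 0 1 - chshTbl 1 0 0 1 + chshTbl 1 1 0 1)
      + (chshTbl 0 0 1 0 - chshTbl 0 1 1 0 - chshTbl 1 0 1 0 + chshTbl 1 1 1 0)
      - (chshTbl 0 0 1 1 - chshTbl 0 1 1 1 - chshTbl 1 0 1 1 + chshTbl 1 1 1 1)
      = Real.sqrt 2 * 2 := by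
    simp only [chshTbl, ← hc, ← hs]
    norm_num
    linear_combination 2 * hc2 + 2 * hs2
  have htot : ∑ lam, q lam *
      ((p₁ 0 lam 0 - p₁ 0 lam 1) * (p₂ 0 lam 0 - p₂ 0 lam 1)
        + (p₁ 0 lam 0 - p₁ 0 lam 1) * (p₂ 1 lam 0 - p₂ 1 lam 1)
        + (p₁ 1 lam 0 - p₁ 1 lam 1) * (p₂ 0 lam 0 - p₂ 0 lam 1)
        - (p₁ 1 lam 0 - p₁ 1 lam 1) * (p₂ 1 lam 0 - p₂ 1 lam 1))
      = Real.sqrt 2 * 2 := by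
    rw [← htbl, ← hE 0 0, ← hE 0 1, ← hE 1 0, ← hE 1 1,
      ← Finset.sum_add_distrib, ← Finset.sum_add_distrib, ← Finset.sum_sub_distrib]
    exact Finset.sum_congr rfl fun lam _ => by ring
  have hb : ∀ lam : Λ,
      ((p₁ 0 lam 0 - p₁ 0 lam 1) * (p₂ 0 lam 0 - p₂ 0 lam 1)
        + (p₁ 0 lam 0 - p₁ 0 lam 1) * (p₂ 1 lam 0 - p₂ 1 lam 1)
        + (p₁ 1 lam 0 - p₁ 1 lam 1) * (p₂ 0 lam 0 - p₂ 0 lam 1)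
        - (p₁ 1 lam 0 - p₁ 1 lam 1) * (p₂ 1 lam 0 - p₂ 1 lam 1)) ≤ 2 := by
    intro lam
    obtain ⟨a0n, a0s⟩ := hp₁ 0 lam; obtain ⟨a1n, a1s⟩ := hp₁ 1 lam
    obtain ⟨b0n, b0s⟩ := hp₂ 0 lam; obtain ⟨b1n, b1s⟩ := hp₂ 1 lam
    rw [Fin.sum_univ_two] at a0s a1s b0s b1s
    set A0 := p₁ 0 lam 0 - p₁ 0 lam 1 with hA0
    set A1 := p₁ 1 lam 0 - p₁ 1 lam 1 with hA1
    set B0 := p₂ 0 lam 0 - p₂ 0 lam 1 with hB0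
    set B1 := p₂ 1 lam 0 - p₂ 1 lam 1 with hB1
    have hA0b : -1 ≤ A0 ∧ A0 ≤ 1 := ⟨by rw [hA0]; linarith [a0n 0, a0n 1], by rw [hA0]; linarith [a0n 0, a0n 1]⟩
    have hA1b : -1 ≤ A1 ∧ A1 ≤ 1 := ⟨by rw [hA1]; linarith [a1n 0, a1n 1], by rw [hA1]; linarith [a1n 0, a1n 1]⟩
    have hB0b : -1 ≤ B0 ∧ B0 ≤ 1 := ⟨by rw [hB0]; linarith [b0n 0, b0n 1], by rw [hB0]; linarith [b0n 0, b0n 1]⟩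
    have hB1b : -1 ≤ B1 ∧ B1 ≤ 1 := ⟨by rw [hB1]; linarith [b1n 0, b1n 1], by rw [hB1]; linarith [b1n 0, b1n 1]⟩
    obtain ⟨hA0l, hA0r⟩ := hA0b; obtain ⟨hA1l, hA1r⟩ := hA1b
    obtain ⟨hB0l, hB0r⟩ := hB0b; obtain ⟨hB1l, hB1r⟩ := hB1b
    rcases le_total 0 (B0 + B1) with hu | hu <;> rcases le_total 0 (B0 - B1) with hv | hv
    · nlinarith [mul_nonneg (by linarith : (0:ℝ) ≤ 1 - A0) hu,
        mul_nonneg (by linarith : (0:ℝ) ≤ 1 - A1) hv]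
    · nlinarith [mul_nonneg (by linarith : (0:ℝ) ≤ 1 - A0) hu,
        mul_nonneg (by linarith : (0:ℝ) ≤ 1 + A1) (by linarith : (0:ℝ) ≤ B1 - B0)]
    · nlinarith [mul_nonneg (by linarith : (0:ℝ) ≤ 1 + A0) (by linarith : (0:ℝ) ≤ -(B0 + B1)),
        mul_nonneg (by linarith : (0:ℝ) ≤ 1 - A1) hv]
    · nlinarith [mul_nonneg (by linarith : (0:ℝ) ≤ 1 + A0) (by linarith : (0:ℝ) ≤ -(B0 + B1)),
        mul_nonneg (by linarith : (0:ℝ) ≤ 1 + A1) (by linarith : (0:ℝ) ≤ B1 - B0)]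
  have hle : Real.sqrt 2 * 2 ≤ 2 := by
    rw [← htot]
    calc ∑ lam, q lam *
        ((p₁ 0 lam 0 - p₁ 0 lam 1) * (p₂ 0 lam 0 - p₂ 0 lam 1)
          + (p₁ 0 lam 0 - p₁ 0 lam 1) * (p₂ 1 lam 0 - p₂ 1 lam 1)
          + (p₁ 1 lam 0 - p₁ 1 lam 1) * (p₂ 0 lam 0 - p₂ 0 lam 1)
          - (p₁ 1 lam 0 - p₁ 1 lam 1) * (p₂ 1 lam 0 - p₂ 1 lam 1))
        ≤ ∑ lam, q lam * 2 :=
          Finset.sum_le_sum fun lam _ => mul_le_mul_of_nonneg_left (hb lam) (hq.1 lam)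
      _ = 2 := by rw [← Finset.sum_mul, hq.2, one_mul]
  nlinarith [Real.sq_sqrt (by norm_num : (0:ℝ) ≤ 2), Real.sqrt_nonneg 2]
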